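/- Let (X,d) be a metric space, M a nonempty proper closed subset of X, and F : X∖M → (0,∞) any positive function. Then the generalized Ibragimov metric v(x,y) = 2·log((d(x,y) + max{F(x), F(y)}) / √(F(x)·F(y))) on X∖M is Gromov hyperbolic with Gromov constant δ ≤ log 4: for all x,y,z,w ∈ X∖M, v(x,z) + v(y,w) ≤ max{ v(x,w) + v(y,z), v(x,y) + v(z,w) } + 2·log 4. -/

import Mathlib

open Real Filter

/-- Generalized Ibragimov function. -/
noncomputable def vIb {X : Type*} [MetricSpace X] (F : X → ℝ) (x y : X) : ℝ :=
  2 * Real.log ((dist x y + max (F x) (F y)) / Real.sqrt (F x * F y))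

/-- The case where `a` is the largest of the four. -/
lemma keymax {a b c d p q : ℝ} (hb : 0 ≤ b) (hc : 0 ≤ c) (hd : 0 ≤ d)
    (hba : b ≤ a) (hca : c ≤ a) (hda : d ≤ a)
    (hq0 : 0 ≤ q) (hp2 : p ≤ d + c) (hq2 : q ≤ b + c) :
    p * q ≤ 4 * max (d * b) (a * c) := by
  have hpq : p * q ≤ (d + c) * (b + c) := mul_le_mul hp2 hq2 hq0 (by linarith)
  rcases le_total (d * b) (a * c) with h | h
  · rw [max_eq_right h]
    nlinarith [mul_nonneg (sub_nonneg.2 hba) hc, mul_nonneg (sub_nonneg.2 hca) hc,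
      mul_nonneg (sub_nonneg.2 hda) hc]
  · rw [max_eq_left h]
    nlinarith [mul_nonneg (sub_nonneg.2 hba) hc, mul_nonneg (sub_nonneg.2 hca) hc,
      mul_nonneg (sub_nonneg.2 hda) hc]

lemma key_prod {a b c d p q : ℝ} (ha : 0 ≤ a) (hb : 0 ≤ b) (hc : 0 ≤ c) (hd : 0 ≤ d)
    (hp0 : 0 ≤ p) (hq0 : 0 ≤ q)
    (hp1 : p ≤ a + b) (hp2 : p ≤ d + c) (hq1 : q ≤ a + d) (hq2 : q ≤ b + c) :
    p * q ≤ 4 * max (d * b) (a * c) := by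
  rcases le_total a b with h1 | h1 <;> rcases le_total c d with h2 | h2
  · -- a ≤ b, c ≤ d : max is b or d
    rcases le_total b d with h3 | h3
    · -- d max : apply with (a,b,c,d) := (d,c,b,a)
      have H := keymax (a := d) (b := c) (c := b) (d := a) hc hb ha
        (by linarith) (by linarith) (by linarith) hq0
        (show p ≤ a + b by linarith) (show q ≤ c + b by linarith)
      calc p * q ≤ 4 * max (a * c) (d * b) := H
        _ = 4 * max (d * b) (a * c) := by rw [max_comm]
    · -- b max : apply with (a,b,c,d) := (b,a,d,c)
      have H := keymax (a := b) (b := a) (c := d) (d := c) ha hd hc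
        (by linarith) (by linarith) (by linarith) hq0
        (show p ≤ c + d by linarith) (show q ≤ a + d by linarith)
      calc p * q ≤ 4 * max (c * a) (b * d) := H
        _ = 4 * max (d * b) (a * c) := by rw [max_comm, mul_comm d b, mul_comm a c]
  · -- a ≤ b, d ≤ c : max is b or c
    rcases le_total b c with h3 | h3
    · -- c max : apply with (a,b,c,d) := (c,d,a,b)
      have H := keymax (a := c) (b := d) (c := a) (d := b) hd ha hb
        (by linarith) (by linarith) (by linarith) hq0
        (show p ≤ b + a by linarith) (show q ≤ d + a by linarith)
      calc p * q ≤ 4 * max (b * d) (c * a) := H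
        _ = 4 * max (d * b) (a * c) := by rw [mul_comm b d, mul_comm c a]
    · -- b max
      have H := keymax (a := b) (b := a) (c := d) (d := c) ha hd hc
        (by linarith) (by linarith) (by linarith) hq0
        (show p ≤ c + d by linarith) (show q ≤ a + d by linarith)
      calc p * q ≤ 4 * max (c * a) (b * d) := H
        _ = 4 * max (d * b) (a * c) := by rw [max_comm, mul_comm d b, mul_comm a c]
  · -- b ≤ a, c ≤ d : max is a or d
    rcases le_total a d with h3 | h3
    · -- d max
      have H := keymax (a := d) (b := c) (c := b) (d := a) hc hb ha
        (by linarith) (by linarith) (by linarith) hq0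
        (show p ≤ a + b by linarith) (show q ≤ c + b by linarith)
      calc p * q ≤ 4 * max (a * c) (d * b) := H
        _ = 4 * max (d * b) (a * c) := by rw [max_comm]
    · -- a max
      exact keymax hb hc hd h1 (by linarith) (by linarith) hq0 hp2 hq2
  · -- b ≤ a, d ≤ c : max is a or c
    rcases le_total a c with h3 | h3
    · -- c max
      have H := keymax (a := c) (b := d) (c := a) (d := b) hd ha hb
        (by linarith) (by linarith) (by linarith) hq0
        (show p ≤ b + a by linarith) (show q ≤ d + a by linarith)
      calc p * q ≤ 4 * max (b * d) (c * a) := H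
        _ = 4 * max (d * b) (a * c) := by rw [mul_comm b d, mul_comm c a]
    · -- a max
      exact keymax hb hc hd h1 h3 (by linarith) hq0 hp2 hq2

lemma two_log_add {A B f g : ℝ} (hA : 0 < A) (hB : 0 < B) (hf : 0 < f) (hg : 0 < g) :
    2 * Real.log (A / Real.sqrt f) + 2 * Real.log (B / Real.sqrt g) =
      2 * Real.log (A * B / Real.sqrt (f * g)) := by
  rw [Real.sqrt_mul hf.le]
  have h : A * B / (Real.sqrt f * Real.sqrt g) = (A / Real.sqrt f) * (B / Real.sqrt g) := by
    rw [div_mul_div_comm]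
  rw [h, Real.log_mul (by positivity) (by positivity), mul_add]

theorem stmt_15 {X : Type*} [MetricSpace X] (M : Set X)
    (hMclosed : IsClosed M) (hMne : M.Nonempty) (hMproper : M ≠ Set.univ)
    (F : X → ℝ) (hFpos : ∀ x ∉ M, 0 < F x) :
    ∀ x ∉ M, ∀ y ∉ M, ∀ z ∉ M, ∀ w ∉ M,
      vIb F x z + vIb F y w ≤
        max (vIb F x w + vIb F y z) (vIb F x y + vIb F z w) + 2 * Real.log 4 := by
  intro x hx y hy z hz w hw
  have fx := hFpos x hx; have fy := hFpos y hy; have fz := hFpos z hz; have fw := hFpos w hw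
  set A : X → X → ℝ := fun u v => dist u v + max (F u) (F v) with hA
  have hAsymm : ∀ u v : X, A u v = A v u := by
    intro u v; simp only [hA]; rw [dist_comm, max_comm]
  have hApos : ∀ u v : X, 0 < F u → 0 < F v → 0 < A u v := by
    intro u v hu hv
    have h1 : 0 < max (F u) (F v) := lt_max_of_lt_left hu
    have h2 := dist_nonneg (x := u) (y := v)
    simp only [hA]; linarith
  have htri : ∀ u v t : X, 0 ≤ F u → 0 ≤ F v → 0 ≤ F t → A u t ≤ A u v + A v t := by
    intro u v t hu hv ht
    have hd : dist u t ≤ dist u v + dist v t := dist_triangle u v t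
    have hm : max (F u) (F t) ≤ max (F u) (F v) + max (F v) (F t) := by
      apply max_le
      · exact le_add_of_le_of_nonneg (le_max_left _ _) (le_max_of_le_left hv)
      · exact le_add_of_nonneg_of_le (le_max_of_le_left hu) (le_max_right _ _)
    simp only [hA]; linarith
  have hprod : A x z * A y w ≤ 4 * max (A x w * A y z) (A x y * A z w) := by
    have h1 := htri x y z fx.le fy.le fz.le
    have h2 := htri x w z fx.le fw.le fz.le
    have h3 := htri y x w fy.le fx.le fw.le
    have h4 := htri y z w fy.le fz.le fw.le
    rw [hAsymm w z] at h2
    rw [hAsymm y x] at h3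
    exact key_prod (a := A x y) (b := A y z) (c := A z w) (d := A x w)
      (hApos x y fx fy).le (hApos y z fy fz).le (hApos z w fz fw).le (hApos x w fx fw).le
      (hApos x z fx fz).le (hApos y w fy fw).le h1 h2 (by linarith) h4
  set T := Real.sqrt ((F x * F z) * (F y * F w)) with hT
  have hTpos : 0 < T := by rw [hT]; positivity
  have e1 : vIb F x z + vIb F y w = 2 * Real.log (A x z * A y w / T) := by
    simp only [vIb, hA]
    rw [two_log_add (hApos x z fx fz) (hApos y w fy fw) (by positivity) (by positivity)]
  have e2 : vIb F x w + vIb F y z = 2 * Real.log (A x w * A y z / T) := by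
    simp only [vIb, hA]
    rw [two_log_add (hApos x w fx fw) (hApos y z fy fz) (by positivity) (by positivity),
      show F x * F w * (F y * F z) = F x * F z * (F y * F w) by ring, ← hT]
  have e3 : vIb F x y + vIb F z w = 2 * Real.log (A x y * A z w / T) := by
    simp only [vIb, hA]
    rw [two_log_add (hApos x y fx fy) (hApos z w fz fw) (by positivity) (by positivity),
      show F x * F y * (F z * F w) = F x * F z * (F y * F w) by ring, ← hT]
  rw [e1, e2, e3]
  have hP : 0 < A x z * A y w / T := by
    have h1 := hApos x z fx fz; have h2 := hApos y w fy fw; positivity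
  rcases le_total (A x w * A y z) (A x y * A z w) with h | h
  · apply le_trans _ (add_le_add_left (le_max_right _ _) (2 * Real.log 4))
    rw [max_eq_right h] at hprod
    have h5 : A x z * A y w / T ≤ 4 * (A x y * A z w / T) := by
      rw [← mul_div_assoc]
      exact (div_le_div_iff_of_pos_right hTpos).mpr hprod
    have h6 : Real.log (A x z * A y w / T) ≤ Real.log (4 * (A x y * A z w / T)) :=
      Real.log_le_log hP h5
    have h7 : 0 < A x y * A z w / T := by
      have h1 := hApos x y fx fy; have h2 := hApos z w fz fw; positivity
    rw [Real.log_mul (by norm_num) (ne_of_gt h7)] at h6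
    linarith
  · apply le_trans _ (add_le_add_left (le_max_left _ _) (2 * Real.log 4))
    rw [max_eq_left h] at hprod
    have h5 : A x z * A y w / T ≤ 4 * (A x w * A y z / T) := by
      rw [← mul_div_assoc]
      exact (div_le_div_iff_of_pos_right hTpos).mpr hprod
    have h6 : Real.log (A x z * A y w / T) ≤ Real.log (4 * (A x w * A y z / T)) :=
      Real.log_le_log hP h5
    have h7 : 0 < A x w * A y z / T := by
      have h1 := hApos x w fx fw; have h2 := hApos y z fy fz; positivity
    rw [Real.log_mul (by norm_num) (ne_of_gt h7)] at h6
    linarith
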